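/- Gradient of the discounted state visitation distribution (Lemma C.1). In the finite discounted setting, let θ ↦ π_θ be a differentiably parameterized policy (θ ∈ ℝ, π_θ(a|s) > 0 for all s,a, θ ↦ π_θ(a|s) differentiable). Then for every state s' ∈ 𝒮, the map θ ↦ d_μ^{π_θ}(s') is differentiable and (d/dθ) d_μ^{π_θ}(s') = (1/(1−γ))·Σ_{(s,a)} d_μ^{π_θ}(s,a)·((d/dθ) π_θ(a|s) / π_θ(a|s))·d_{s,a}^{π_θ}(s'), where d_μ^{π}(s') = (1−γ)Σ_{t=0}^∞ γ^t Pr(s_t = s' | s_0 ∼ μ; π) is the discounted state visitation distribution, d_μ^π(s,a) = d_μ^π(s)·π(a|s) is the discounted state-action visitation distribution, and d_{s,a}^π(s') is the discounted state visitation distribution of the process started with s_0 = s, a_0 = a. -/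

import Mathlib

open Finset

/-- `prFrom P π s0 a0 t s`: probability that the process started with `s_0 = s0`,
`a_0 = a0` (subsequent actions from the stationary policy `π`, states evolving by `P`)
is at state `s` at time `t`. -/
noncomputable def prFrom {S A : Type} [Fintype S] [Fintype A] [DecidableEq S]
    (P : S → A → S → ℝ) (π : S → A → ℝ) (s0 : S) (a0 : A) : ℕ → S → ℝ
  | 0 => fun s => if s = s0 then 1 else 0
  | 1 => fun s => P s0 a0 s
  | t + 2 => fun s =>
      ∑ s' : S, ∑ a' : A, prFrom P π s0 a0 (t + 1) s' * π s' a' * P s' a' s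

/-- Discounted state visitation distribution started from `(s0, a0)`. -/
noncomputable def dvisit {S A : Type} [Fintype S] [Fintype A] [DecidableEq S]
    (P : S → A → S → ℝ) (π : S → A → ℝ) (γ : ℝ) (s0 : S) (a0 : A) (s' : S) : ℝ :=
  (1 - γ) * ∑' t : ℕ, γ ^ t * prFrom P π s0 a0 t s'

/-- `prMu P π μ t s`: probability that the process with initial distribution `μ` and
stationary policy `π` is at state `s` at time `t`. -/
noncomputable def prMu {S A : Type} [Fintype S] [Fintype A]
    (P : S → A → S → ℝ) (π : S → A → ℝ) (μ : S → ℝ) : ℕ → S → ℝ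
  | 0 => μ
  | t + 1 => fun s => ∑ s' : S, ∑ a' : A, prMu P π μ t s' * π s' a' * P s' a' s

/-- Discounted state visitation distribution `d_μ^π(s') = (1−γ) ∑ γ^t Pr(s_t = s')`. -/
noncomputable def dstate {S A : Type} [Fintype S] [Fintype A]
    (P : S → A → S → ℝ) (π : S → A → ℝ) (γ : ℝ) (μ : S → ℝ) (s' : S) : ℝ :=
  (1 - γ) * ∑' t : ℕ, γ ^ t * prMu P π μ t s'

section AuxDSV

set_option linter.unusedSectionVars false

attribute [local instance] Matrix.linftyOpNormedRing Matrix.linftyOpNormedAlgebra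

variable {S A : Type} [Fintype S] [Fintype A] [DecidableEq S]

/-- The state transition matrix of the Markov chain induced by a policy. -/
noncomputable def Mmat (P : S → A → S → ℝ) (π : S → A → ℝ) : Matrix S S ℝ :=
  Matrix.of fun s s' => ∑ a, π s a * P s a s'

lemma matrix_norm_le' {M : Matrix S S ℝ} {c : ℝ} (hc : 0 ≤ c)
    (h : ∀ s, ∑ s', |M s s'| ≤ c) : ‖M‖ ≤ c := by
  rw [Matrix.linfty_opNorm_def]
  have h2 : (univ.sup fun i : S => ∑ j : S, ‖M i j‖₊) ≤ c.toNNReal := by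
    refine Finset.sup_le fun i _ => ?_
    rw [← NNReal.coe_le_coe]
    push_cast
    simpa [Real.norm_eq_abs, Real.coe_toNNReal c hc] using h i
  calc ((univ.sup fun i : S => ∑ j : S, ‖M i j‖₊ : NNReal) : ℝ) ≤ (c.toNNReal : ℝ) := by
        exact_mod_cast h2
    _ = c := Real.coe_toNNReal c hc

lemma norm_smul_Mmat_lt (P : S → A → S → ℝ) (π : S → A → ℝ) {γ : ℝ}
    (hP : ∀ s a, (∀ s', 0 ≤ P s a s') ∧ ∑ s', P s a s' = 1)
    (hπ0 : ∀ s a, 0 ≤ π s a) (hπ1 : ∀ s, ∑ a, π s a = 1)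
    (hγ : γ ∈ Set.Ioo (0:ℝ) 1) : ‖γ • Mmat P π‖ < 1 := by
  have hM : ‖Mmat P π‖ ≤ 1 := by
    refine matrix_norm_le' zero_le_one fun s => ?_
    have habs : ∀ s', |Mmat P π s s'| = ∑ a, π s a * P s a s' := fun s' => by
      rw [abs_of_nonneg]
      · rfl
      · exact Finset.sum_nonneg fun a _ => mul_nonneg (hπ0 s a) ((hP s a).1 s')
    simp only [habs]
    rw [Finset.sum_comm]
    calc ∑ a, ∑ s', π s a * P s a s' = ∑ a, π s a * ∑ s', P s a s' := by
          simp [Finset.mul_sum]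
      _ = 1 := by simp only [(fun a => (hP s a).2)]; simpa using hπ1 s
      _ ≤ 1 := le_refl 1
  calc ‖γ • Mmat P π‖ = |γ| * ‖Mmat P π‖ := norm_smul γ _
    _ ≤ |γ| * 1 := mul_le_mul_of_nonneg_left hM (abs_nonneg γ)
    _ < 1 := by rw [mul_one, abs_of_pos hγ.1]; exact hγ.2

/-- Evaluation `X ↦ ∑ s, v s * X s s'` as a continuous linear map. -/
noncomputable def rowEval (v : S → ℝ) (s' : S) : Matrix S S ℝ →L[ℝ] ℝ :=
  haveI : CompleteSpace (Matrix S S ℝ) := FiniteDimensional.complete ℝ _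
  LinearMap.toContinuousLinearMap
  { toFun := fun X => ∑ s, v s * X s s'
    map_add' := fun X Y => by simp [Matrix.add_apply, mul_add, Finset.sum_add_distrib]
    map_smul' := fun c X => by
      simp [Matrix.smul_apply, smul_eq_mul, Finset.mul_sum, mul_comm, mul_assoc, mul_left_comm] }

@[simp] lemma rowEval_apply (v : S → ℝ) (s' : S) (X : Matrix S S ℝ) :
    rowEval v s' X = ∑ s, v s * X s s' := rfl

lemma vecMul_apply' (v : S → ℝ) (N : Matrix S S ℝ) (s' : S) :
    Matrix.vecMul v N s' = ∑ s, v s * N s s' := rfl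

lemma step_eq (P : S → A → S → ℝ) (π : S → A → ℝ) (v : S → ℝ) (s : S) :
    ∑ s' : S, ∑ a' : A, v s' * π s' a' * P s' a' s = Matrix.vecMul v (Mmat P π) s := by
  simp only [Matrix.vecMul, dotProduct, Mmat, Matrix.of_apply, Finset.mul_sum]
  exact Finset.sum_congr rfl fun s' _ => Finset.sum_congr rfl fun a _ => by ring

lemma prMu_eq (P : S → A → S → ℝ) (π : S → A → ℝ) (μ : S → ℝ) (t : ℕ) :
    prMu P π μ t = Matrix.vecMul μ ((Mmat P π) ^ t) := by
  induction t with
  | zero => simp [prMu, Matrix.vecMul_one]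
  | succ t ih =>
    funext s
    rw [show prMu P π μ (t+1) s = ∑ s' : S, ∑ a' : A, prMu P π μ t s' * π s' a' * P s' a' s from rfl,
      ih, step_eq, pow_succ, ← Matrix.vecMul_vecMul]

lemma prFrom_succ_eq (P : S → A → S → ℝ) (π : S → A → ℝ) (s0 : S) (a0 : A) (t : ℕ) :
    prFrom P π s0 a0 (t + 1) = Matrix.vecMul (P s0 a0) ((Mmat P π) ^ t) := by
  induction t with
  | zero => simp [prFrom, Matrix.vecMul_one]
  | succ t ih =>
    funext s
    rw [show prFrom P π s0 a0 (t+2) s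
        = ∑ s' : S, ∑ a' : A, prFrom P π s0 a0 (t+1) s' * π s' a' * P s' a' s from rfl,
      ih, step_eq, pow_succ, ← Matrix.vecMul_vecMul]

lemma dstate_eq (P : S → A → S → ℝ) (π : S → A → ℝ) (μ : S → ℝ) {γ : ℝ}
    (hlt : ‖γ • Mmat P π‖ < 1) (s' : S) :
    dstate P π γ μ s'
      = (1 - γ) * rowEval μ s' (Ring.inverse (1 - γ • Mmat P π)) := by
  haveI : CompleteSpace (Matrix S S ℝ) := FiniteDimensional.complete ℝ _
  have hgeo := hasSum_geom_series_inverse (γ • Mmat P π) hlt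
  have hs := hgeo.mapL (rowEval μ s')
  have heq : (fun t => rowEval μ s' ((γ • Mmat P π) ^ t))
      = fun t => γ ^ t * prMu P π μ t s' := by
    funext t
    rw [prMu_eq, smul_pow]
    simp [vecMul_apply', Finset.mul_sum, mul_comm, mul_assoc, mul_left_comm]
  rw [heq] at hs
  rw [dstate, hs.tsum_eq]

lemma dvisit_eq (P : S → A → S → ℝ) (π : S → A → ℝ) {γ : ℝ}
    (hlt : ‖γ • Mmat P π‖ < 1) (s0 : S) (a0 : A) (s' : S) :
    dvisit P π γ s0 a0 s'
      = (1 - γ) * ((if s' = s0 then (1:ℝ) else 0)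
          + γ * rowEval (P s0 a0) s' (Ring.inverse (1 - γ • Mmat P π))) := by
  haveI : CompleteSpace (Matrix S S ℝ) := FiniteDimensional.complete ℝ _
  have hgeo := hasSum_geom_series_inverse (γ • Mmat P π) hlt
  have hs := (hgeo.mapL (rowEval (P s0 a0) s')).mul_left γ
  have heq : (fun t => γ * rowEval (P s0 a0) s' ((γ • Mmat P π) ^ t))
      = fun t => γ ^ (t + 1) * prFrom P π s0 a0 (t + 1) s' := by
    funext t
    rw [prFrom_succ_eq, smul_pow, pow_succ]
    simp [vecMul_apply', Finset.mul_sum, mul_comm, mul_assoc, mul_left_comm]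
  rw [heq] at hs
  have hfull := (hasSum_nat_add_iff (f := fun t => γ ^ t * prFrom P π s0 a0 t s') 1).1 hs
  rw [dvisit, hfull.tsum_eq, Finset.sum_range_one]
  have h0 : prFrom P π s0 a0 0 s' = if s' = s0 then 1 else 0 := rfl
  rw [pow_zero, one_mul, h0]
  ring

noncomputable def Cmat (P : S → A → S → ℝ) (q : S × A) : Matrix S S ℝ :=
  Matrix.of fun s₁ s₂ => if s₁ = q.1 then P q.1 q.2 s₂ else 0

lemma Mmat_decomp (P : S → A → S → ℝ) (π : S → A → ℝ) :
    Mmat P π = ∑ q : S × A, π q.1 q.2 • Cmat P q := by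
  ext s₁ s₂
  simp only [Mmat, Matrix.of_apply, Matrix.sum_apply, Matrix.smul_apply, Cmat,
    smul_eq_mul, Fintype.sum_prod_type, mul_ite, mul_zero]
  rw [Finset.sum_comm]
  simp

lemma hasDerivAt_Mmat (P : S → A → S → ℝ) (pol : ℝ → S → A → ℝ)
    (hdiff : ∀ s a, Differentiable ℝ (fun θ => pol θ s a)) (θ₀ : ℝ) :
    HasDerivAt (fun θ => Mmat P (pol θ))
      (Mmat P (fun s a => deriv (fun θ => pol θ s a) θ₀)) θ₀ := by
  have h : HasDerivAt (fun θ => ∑ q : S × A, pol θ q.1 q.2 • Cmat P q)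
      (∑ q : S × A, deriv (fun θ => pol θ q.1 q.2) θ₀ • Cmat P q) θ₀ := by
    refine HasDerivAt.fun_sum fun q _ => ?_
    exact ((hdiff q.1 q.2 θ₀).hasDerivAt).smul_const (Cmat P q)
  have hfun : (fun θ => Mmat P (pol θ)) = fun θ => ∑ q : S × A, pol θ q.1 q.2 • Cmat P q :=
    funext fun θ => Mmat_decomp P (pol θ)
  rw [Mmat_decomp P (fun s a => deriv (fun θ => pol θ s a) θ₀), hfun]
  exact h

lemma hasDerivAt_resolvent (P : S → A → S → ℝ) {γ : ℝ} (pol : ℝ → S → A → ℝ)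
    (hdiff : ∀ s a, Differentiable ℝ (fun θ => pol θ s a)) (θ₀ : ℝ)
    (hlt : ‖γ • Mmat P (pol θ₀)‖ < 1) :
    HasDerivAt (fun θ => Ring.inverse (1 - γ • Mmat P (pol θ)))
      (γ • (Ring.inverse (1 - γ • Mmat P (pol θ₀))
          * Mmat P (fun s a => deriv (fun θ => pol θ s a) θ₀)
          * Ring.inverse (1 - γ • Mmat P (pol θ₀)))) θ₀ := by
  haveI : CompleteSpace (Matrix S S ℝ) := FiniteDimensional.complete ℝ _
  set D := Mmat P (fun s a => deriv (fun θ => pol θ s a) θ₀) with hD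
  have hF : HasDerivAt (fun θ => 1 - γ • Mmat P (pol θ)) (-(γ • D)) θ₀ :=
    ((hasDerivAt_Mmat P pol hdiff θ₀).const_smul γ).const_sub 1
  set u : (Matrix S S ℝ)ˣ := Units.oneSub (γ • Mmat P (pol θ₀)) hlt with hu
  have hval : (u : Matrix S S ℝ) = 1 - γ • Mmat P (pol θ₀) := rfl
  have hinv : (↑u⁻¹ : Matrix S S ℝ) = Ring.inverse (1 - γ • Mmat P (pol θ₀)) := by
    rw [← hval, Ring.inverse_unit]
  have hfd := hasFDerivAt_ringInverse (𝕜 := ℝ) u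
  rw [hval] at hfd
  have hcomp := hfd.comp_hasDerivAt θ₀ hF
  have h2 : HasDerivAt (fun θ => Ring.inverse (1 - γ • Mmat P (pol θ)))
      ((-ContinuousLinearMap.mulLeftRight ℝ (Matrix S S ℝ) ↑u⁻¹ ↑u⁻¹) (-(γ • D))) θ₀ := hcomp
  convert h2 using 1
  simp only [ContinuousLinearMap.neg_apply, ContinuousLinearMap.mulLeftRight_apply, hinv]
  simp [smul_mul_assoc, mul_smul_comm]

end AuxDSV

section Main
attribute [local instance] Matrix.linftyOpNormedRing Matrix.linftyOpNormedAlgebra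

/-- **Gradient of the discounted state visitation distribution (Lemma C.1).**
For a differentiably parameterized policy `θ ↦ π_θ` with `π_θ(a|s) > 0`, the map
`θ ↦ d_μ^{π_θ}(s')` is differentiable with derivative
`(1/(1−γ))·∑_{(s,a)} d_μ^{π_θ}(s,a)·(∂_θ π_θ(a|s)/π_θ(a|s))·d_{s,a}^{π_θ}(s')`,
where `d_μ^{π}(s,a) = d_μ^{π}(s)·π(a|s)`. -/
theorem grad_discounted_state_visitation
    (S A : Type) [Fintype S] [Fintype A] [DecidableEq S]
    (P : S → A → S → ℝ) (μ : S → ℝ) (γ : ℝ)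
    (hP : ∀ s a, (∀ s', 0 ≤ P s a s') ∧ ∑ s', P s a s' = 1)
    (hμ : (∀ s, 0 ≤ μ s) ∧ ∑ s, μ s = 1)
    (hγ : γ ∈ Set.Ioo (0 : ℝ) 1)
    (pol : ℝ → S → A → ℝ)
    (hpos : ∀ θ s a, 0 < pol θ s a)
    (hsum : ∀ θ s, ∑ a, pol θ s a = 1)
    (hdiff : ∀ s a, Differentiable ℝ (fun θ => pol θ s a)) :
    ∀ (θ₀ : ℝ) (s' : S),
      HasDerivAt (fun θ => dstate P (pol θ) γ μ s')
        ((1 / (1 - γ)) * ∑ q : S × A,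
          (dstate P (pol θ₀) γ μ q.1 * pol θ₀ q.1 q.2) *
            (deriv (fun θ => pol θ q.1 q.2) θ₀ / pol θ₀ q.1 q.2) *
              dvisit P (pol θ₀) γ q.1 q.2 s') θ₀ := by
  intro θ₀ s'
  haveI : CompleteSpace (Matrix S S ℝ) := FiniteDimensional.complete ℝ _
  have hlt : ∀ θ, ‖γ • Mmat P (pol θ)‖ < 1 := fun θ =>
    norm_smul_Mmat_lt P (pol θ) hP (fun s a => (hpos θ s a).le) (hsum θ) hγ
  have hne : (1:ℝ) - γ ≠ 0 := by have := hγ.2; intro h; linarith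
  set Gm : Matrix S S ℝ := Ring.inverse (1 - γ • Mmat P (pol θ₀)) with hGm
  set D : Matrix S S ℝ := Mmat P (fun s a => deriv (fun θ => pol θ s a) θ₀) with hDdef
  have hG := hasDerivAt_resolvent P pol hdiff θ₀ (hlt θ₀)
  have hL : HasDerivAt
      (fun θ => (1 - γ) * rowEval μ s' (Ring.inverse (1 - γ • Mmat P (pol θ))))
      ((1 - γ) * rowEval μ s' (γ • (Gm * D * Gm))) θ₀ :=
    ((rowEval μ s').hasFDerivAt.comp_hasDerivAt θ₀ hG).const_mul (1 - γ)
  have hfe : (fun θ => dstate P (pol θ) γ μ s')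
      = fun θ => (1 - γ) * rowEval μ s' (Ring.inverse (1 - γ • Mmat P (pol θ))) :=
    funext fun θ => dstate_eq P (pol θ) μ (hlt θ) s'
  rw [hfe]
  convert hL using 1
  -- now prove the scalar identity
  have hzero : ∀ s, ∑ a, deriv (fun θ => pol θ s a) θ₀ = 0 := by
    intro s
    have h1 : HasDerivAt (fun θ => ∑ a, pol θ s a)
        (∑ a, deriv (fun θ => pol θ s a) θ₀) θ₀ :=
      HasDerivAt.fun_sum fun a _ => (hdiff s a θ₀).hasDerivAt
    have h2 : (fun θ => ∑ a, pol θ s a) = fun _ => (1:ℝ) := funext fun θ => hsum θ s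
    rw [h2] at h1
    exact h1.unique (hasDerivAt_const θ₀ 1)
  have hterm : ∀ q : S × A,
      (dstate P (pol θ₀) γ μ q.1 * pol θ₀ q.1 q.2) *
        (deriv (fun θ => pol θ q.1 q.2) θ₀ / pol θ₀ q.1 q.2) *
          dvisit P (pol θ₀) γ q.1 q.2 s'
      = (1 - γ)^2 * (rowEval μ q.1 Gm * deriv (fun θ => pol θ q.1 q.2) θ₀ *
          ((if s' = q.1 then (1:ℝ) else 0) + γ * rowEval (P q.1 q.2) s' Gm)) := by
    intro q
    rw [dstate_eq P (pol θ₀) μ (hlt θ₀) q.1, dvisit_eq P (pol θ₀) (hlt θ₀) q.1 q.2 s', ← hGm]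
    have hp : pol θ₀ q.1 q.2 ≠ 0 := (hpos θ₀ q.1 q.2).ne'
    field_simp
  rw [Finset.sum_congr rfl fun q _ => hterm q]
  -- split the sum
  have hsplit : ∑ q : S × A, (1 - γ)^2 * (rowEval μ q.1 Gm * deriv (fun θ => pol θ q.1 q.2) θ₀ *
        ((if s' = q.1 then (1:ℝ) else 0) + γ * rowEval (P q.1 q.2) s' Gm))
      = (1 - γ)^2 * γ * ∑ s, rowEval μ s Gm * ((D * Gm) s s') := by
    rw [Finset.mul_sum]
    rw [Fintype.sum_prod_type]
    have hrow : ∀ s : S, ∑ a : A, (1 - γ)^2 * (rowEval μ s Gm * deriv (fun θ => pol θ s a) θ₀ *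
          ((if s' = s then (1:ℝ) else 0) + γ * rowEval (P s a) s' Gm))
        = (1 - γ)^2 * γ * (rowEval μ s Gm * ((D * Gm) s s')) := by
      intro s
      have hDG : (D * Gm) s s' = ∑ a, deriv (fun θ => pol θ s a) θ₀ * rowEval (P s a) s' Gm := by
        simp only [Matrix.mul_apply, hDdef, Mmat, Matrix.of_apply, rowEval_apply,
          Finset.sum_mul, Finset.mul_sum]
        rw [Finset.sum_comm]
        exact Finset.sum_congr rfl fun a _ => Finset.sum_congr rfl fun s₂ _ => by ring
      rw [hDG, Finset.mul_sum, Finset.mul_sum]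
      have expand : ∀ a : A, (1 - γ)^2 * (rowEval μ s Gm * deriv (fun θ => pol θ s a) θ₀ *
            ((if s' = s then (1:ℝ) else 0) + γ * rowEval (P s a) s' Gm))
          = (if s' = s then (1:ℝ) else 0) * ((1 - γ)^2 * rowEval μ s Gm
              * deriv (fun θ => pol θ s a) θ₀)
            + (1 - γ)^2 * γ * (rowEval μ s Gm *
                (deriv (fun θ => pol θ s a) θ₀ * rowEval (P s a) s' Gm)) := fun a => by ring
      rw [Finset.sum_congr rfl fun a _ => expand a, Finset.sum_add_distrib]
      have hfst : ∑ a : A, (if s' = s then (1:ℝ) else 0) * ((1 - γ)^2 * rowEval μ s Gm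
              * deriv (fun θ => pol θ s a) θ₀) = 0 := by
        rw [← Finset.mul_sum]
        have : ∑ a : A, (1 - γ)^2 * rowEval μ s Gm * deriv (fun θ => pol θ s a) θ₀
            = (1 - γ)^2 * rowEval μ s Gm * ∑ a, deriv (fun θ => pol θ s a) θ₀ := by
          rw [Finset.mul_sum]
        rw [this, hzero s]
        simp
      rw [hfst, zero_add]
    rw [Finset.sum_congr rfl fun s _ => hrow s, ← Finset.mul_sum]
  rw [hsplit]
  -- final algebra: relate to matrix products
  have hkey : ∑ s, rowEval μ s Gm * ((D * Gm) s s') = rowEval μ s' (Gm * (D * Gm)) := by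
    have h1 : ∑ s, rowEval μ s Gm * ((D * Gm) s s')
        = Matrix.vecMul (Matrix.vecMul μ Gm) (D * Gm) s' := by
      rw [vecMul_apply']
      exact Finset.sum_congr rfl fun s _ => rfl
    rw [h1, Matrix.vecMul_vecMul]
    rfl
  rw [hkey]
  have : rowEval μ s' (γ • (Gm * D * Gm)) = γ * rowEval μ s' (Gm * (D * Gm)) := by
    rw [mul_assoc, map_smul, smul_eq_mul]
  rw [this]
  field_simp

end Main
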